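/- Let a ≥ 1 be an integer and let L ⊆ ℤ⁴ be the lattice generated by w₁ = (-a+1, a+1, -a+1, a), w₂ = (a+1, a+1, -a+2, a-1), w₃ = (-a-1, a-1, a-1, -a), w₄ = (-a, a, a, a-1). Then the absolute value of the determinant of the 4×4 matrix with rows w₁, w₂, w₃, w₄ equals 8a⁴ - 8a³ + 12a² - 4a. -/

import Mathlib

theorem degree8_odd_lattice_det (a : ℤ) (ha : 1 ≤ a) :
    |(Matrix.of ![![-a + 1, a + 1, -a + 1, a],
                  ![a + 1, a + 1, -a + 2, a - 1],
                  ![-a - 1, a - 1, a - 1, -a],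
                  ![-a, a, a, a - 1]] : Matrix (Fin 4) (Fin 4) ℤ).det| =
      8 * a ^ 4 - 8 * a ^ 3 + 12 * a ^ 2 - 4 * a := by
  have h : (Matrix.of ![![-a + 1, a + 1, -a + 1, a],
                  ![a + 1, a + 1, -a + 2, a - 1],
                  ![-a - 1, a - 1, a - 1, -a],
                  ![-a, a, a, a - 1]] : Matrix (Fin 4) (Fin 4) ℤ).det =
      -(8 * a ^ 4 - 8 * a ^ 3 + 12 * a ^ 2 - 4 * a) := by
    simp [Matrix.det_succ_row_zero, Fin.sum_univ_succ, Fin.succAbove, Fin.castSucc, Fin.castAdd, Fin.castLE,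
      show ((2:Fin 3):Fin 4)=2 from rfl]
    ring
  rw [h, abs_neg, abs_of_nonneg]
  nlinarith [sq_nonneg a, sq_nonneg (a - 1), sq_nonneg (a * a - a)]
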